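/- For a POVM M on a d-dimensional Hilbert space and a density matrix ρ, the observational entropy S_M(ρ) equals log d if and only if ρ − 𝟙/d is Hilbert–Schmidt orthogonal to every element M_i of M. -/

import Mathlib

open Matrix BigOperators
open scoped Classical ComplexOrder

/-- A (finitely indexed) POVM on `ℂ^d`: positive semidefinite elements summing to the identity. -/
def IsPOVM {d : ℕ} {ι : Type*} [Fintype ι] (M : ι → Matrix (Fin d) (Fin d) ℂ) : Prop :=
  (∀ i, (M i).PosSemidef) ∧ ∑ i, M i = 1

/-- A density matrix: positive semidefinite with unit trace. -/
def IsDensity {d : ℕ} (ρ : Matrix (Fin d) (Fin d) ℂ) : Prop :=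
  ρ.PosSemidef ∧ ρ.trace = 1

/-- Outcome probability `tr(M_i ρ)` (real part). -/
noncomputable def prob {d : ℕ} {ι : Type*} [Fintype ι] (M : ι → Matrix (Fin d) (Fin d) ℂ)
    (ρ : Matrix (Fin d) (Fin d) ℂ) (i : ι) : ℝ := ((M i * ρ).trace).re

/-- Measured relative entropy `D_M(ρ‖σ) = Σ_i p_i log (p_i / q_i)`. -/
noncomputable def Dmeas {d : ℕ} {ι : Type*} [Fintype ι] (M : ι → Matrix (Fin d) (Fin d) ℂ)
    (ρ σ : Matrix (Fin d) (Fin d) ℂ) : ℝ :=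
  ∑ i, prob M ρ i * Real.log (prob M ρ i / prob M σ i)

/-- Observational entropy `S_M(ρ) = -Σ_i p_i log (p_i / V_i)` with `V_i = tr M_i`. -/
noncomputable def Sobs {d : ℕ} {ι : Type*} [Fintype ι] (M : ι → Matrix (Fin d) (Fin d) ℂ)
    (ρ : Matrix (Fin d) (Fin d) ℂ) : ℝ :=
  -∑ i, prob M ρ i * Real.log (prob M ρ i / ((M i).trace).re)

/-- `N` is a stochastic post-processing of `M` (`N ≫ M`). -/
def StochPost {d : ℕ} {ι κ : Type*} [Fintype ι] [Fintype κ]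
    (N : κ → Matrix (Fin d) (Fin d) ℂ) (M : ι → Matrix (Fin d) (Fin d) ℂ) : Prop :=
  ∃ Λ : κ → ι → ℝ, (∀ j i, 0 ≤ Λ j i) ∧ (∀ i, ∑ j, Λ j i = 1) ∧
    ∀ j, N j = ∑ i, Λ j i • M i


lemma psd_trace {n : ℕ} {A : Matrix (Fin n) (Fin n) ℂ} (hA : A.PosSemidef) :
    ∃ r : ℝ, 0 ≤ r ∧ A.trace = (r : ℂ) ∧ (r = 0 → A = 0) := by
  open scoped MatrixOrder Matrix.Norms.L2Operator in
  obtain ⟨B, hBeq⟩ := CStarAlgebra.nonneg_iff_eq_star_mul_self.mp hA.nonneg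
  rw [Matrix.star_eq_conjTranspose] at hBeq
  subst hBeq
  refine ⟨∑ i, ∑ j, Complex.normSq (B j i), Finset.sum_nonneg fun i _ => Finset.sum_nonneg fun j _ => Complex.normSq_nonneg _, ?_, ?_⟩
  · simp only [Matrix.trace, Matrix.diag, Matrix.mul_apply, Matrix.conjTranspose_apply]
    push_cast
    refine Finset.sum_congr rfl fun i _ => Finset.sum_congr rfl fun j _ => ?_
    rw [Complex.star_def, mul_comm, Complex.mul_conj]
  · intro h
    have hB : B = 0 := by
      ext i j
      have h1 := (Finset.sum_eq_zero_iff_of_nonneg (fun k _ => Finset.sum_nonneg fun l _ => Complex.normSq_nonneg _)).mp h j (Finset.mem_univ _)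
      have h2 := (Finset.sum_eq_zero_iff_of_nonneg (fun l _ => Complex.normSq_nonneg _)).mp h1 i (Finset.mem_univ _)
      simpa using Complex.normSq_eq_zero.mp h2
    simp [hB]

lemma psd_mul_trace {n : ℕ} {A B : Matrix (Fin n) (Fin n) ℂ} (hA : A.PosSemidef)
    (hB : B.PosSemidef) : ∃ r : ℝ, 0 ≤ r ∧ (A * B).trace = (r : ℂ) := by
  open scoped MatrixOrder Matrix.Norms.L2Operator in
  obtain ⟨C, hCeq⟩ := CStarAlgebra.nonneg_iff_eq_star_mul_self.mp hA.nonneg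
  rw [Matrix.star_eq_conjTranspose] at hCeq
  subst hCeq
  obtain ⟨r, hr0, hr, _⟩ := psd_trace (hB.mul_mul_conjTranspose_same C)
  exact ⟨r, hr0, by rw [Matrix.trace_mul_cycle] at hr; exact hr⟩

lemma gibbs_term {p q : ℝ} (hp : 0 ≤ p) (hq : 0 ≤ q) (h0 : q = 0 → p = 0) :
    0 ≤ p * Real.log (p / q) - (p - q) ∧
      (p * Real.log (p / q) - (p - q) = 0 ↔ p = q) := by
  rcases eq_or_lt_of_le hp with h | h
  · refine ⟨by simp [← h, hq], ?_⟩
    constructor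
    · intro he; simp [← h] at he ⊢; linarith [he]
    · intro he; simp [← h, ← he]
  · have hqpos : 0 < q := by
      rcases eq_or_lt_of_le hq with hv | hv
      · exact absurd (h0 hv.symm) (ne_of_gt h)
      · exact hv
    have hx : 0 < q / p := div_pos hqpos h
    have hlog : Real.log (p / q) = -Real.log (q / p) := by
      rw [show p / q = (q / p)⁻¹ by rw [inv_div], Real.log_inv]
    have key : Real.log (q / p) ≤ q / p - 1 := Real.log_le_sub_one_of_pos hx
    constructor
    · rw [hlog]
      have : p * (q / p - 1) = q - p := by field_simp
      nlinarith [mul_le_mul_of_nonneg_left key hp]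
    · constructor
      · intro he
        by_contra hne
        have hx1 : q / p ≠ 1 := by
          intro hq1
          exact hne ((div_eq_one_iff_eq (ne_of_gt h)).mp hq1).symm
        have strict : Real.log (q / p) < q / p - 1 := Real.log_lt_sub_one_of_pos hx hx1
        rw [hlog] at he
        have : p * (q / p - 1) = q - p := by field_simp
        nlinarith [mul_lt_mul_of_pos_left strict h]
      · intro he; subst he; simp [Real.log_one, div_self (ne_of_gt h)]

theorem stmt3 {d m : ℕ} (hd : 0 < d) (M : Fin m → Matrix (Fin d) (Fin d) ℂ) (hM : IsPOVM M)
    (ρ : Matrix (Fin d) (Fin d) ℂ) (hρ : IsDensity ρ) :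
    Sobs M ρ = Real.log d ↔
      ∀ i, ((ρ - ((d : ℂ))⁻¹ • (1 : Matrix (Fin d) (Fin d) ℂ)) * M i).trace = 0 := by
  obtain ⟨hMp, hMsum⟩ := hM
  obtain ⟨hρp, hρtr⟩ := hρ
  have hdR : (0:ℝ) < d := by exact_mod_cast hd
  -- probabilities are real and nonneg
  have hp : ∀ i, 0 ≤ prob M ρ i ∧ (M i * ρ).trace = ((prob M ρ i : ℝ) : ℂ) := by
    intro i
    obtain ⟨r, hr0, hr⟩ := psd_mul_trace (hMp i) hρp
    have heq : prob M ρ i = r := by rw [prob, hr, Complex.ofReal_re]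
    exact ⟨heq ▸ hr0, by rw [hr, heq]⟩
  -- volumes are real, nonneg, and vanish only for the zero element
  have hV : ∀ i, 0 ≤ ((M i).trace).re ∧ (M i).trace = ((((M i).trace).re : ℝ) : ℂ)
      ∧ (((M i).trace).re = 0 → M i = 0) := by
    intro i
    obtain ⟨r, hr0, hr, hz⟩ := psd_trace (hMp i)
    have heq : ((M i).trace).re = r := by rw [hr, Complex.ofReal_re]
    exact ⟨heq ▸ hr0, by rw [heq]; exact hr, fun h => hz (heq ▸ h)⟩
  have hq0 : ∀ i, ((M i).trace).re = 0 → prob M ρ i = 0 := by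
    intro i h
    have hM0 := (hV i).2.2 h
    simp [prob, hM0]
  -- sum of probabilities is 1
  have hsum_p : ∑ i, prob M ρ i = 1 := by
    have h1 : ∑ i, (M i * ρ).trace = (1:ℂ) := by
      rw [← Matrix.trace_sum, ← Finset.sum_mul, hMsum, one_mul, hρtr]
    have h2 := congrArg Complex.re h1
    simpa [prob, Complex.re_sum] using h2
  -- sum of volumes is d
  have hsum_V : ∑ i, ((M i).trace).re = d := by
    have h1 : ∑ i, (M i).trace = (d:ℂ) := by
      rw [← Matrix.trace_sum, hMsum, Matrix.trace_one]
      simp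
    have h2 := congrArg Complex.re h1
    simpa [Complex.re_sum] using h2
  -- Sobs = log d - D
  have hrw : Sobs M ρ
      = Real.log d - ∑ i, prob M ρ i * Real.log (prob M ρ i / (((M i).trace).re / d)) := by
    have hterm : ∀ i, prob M ρ i * Real.log (prob M ρ i / ((M i).trace).re)
        = prob M ρ i * Real.log (prob M ρ i / (((M i).trace).re / d))
          - prob M ρ i * Real.log d := by
      intro i
      rcases eq_or_lt_of_le (hp i).1 with h | h
      · simp [← h]
      · have hpne : prob M ρ i ≠ 0 := ne_of_gt h
        have hVpos : 0 < ((M i).trace).re := by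
          rcases eq_or_lt_of_le (hV i).1 with hv | hv
          · exact absurd (hq0 i hv.symm) hpne
          · exact hv
        rw [Real.log_div hpne (ne_of_gt hVpos),
          Real.log_div hpne (ne_of_gt (div_pos hVpos hdR)),
          Real.log_div (ne_of_gt hVpos) (ne_of_gt hdR)]
        ring
    rw [Sobs, Finset.sum_congr rfl fun i _ => hterm i, Finset.sum_sub_distrib,
      ← Finset.sum_mul, hsum_p]
    ring
  -- Gibbs inequality: D = 0 ↔ p i = V i / d for all i
  have hterm_nn : ∀ i ∈ Finset.univ, 0 ≤ prob M ρ i * Real.log (prob M ρ i / (((M i).trace).re / d))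
      - (prob M ρ i - ((M i).trace).re / d) := by
    intro i _
    exact (gibbs_term (hp i).1 (div_nonneg (hV i).1 hdR.le)
      (fun h => hq0 i (by field_simp at h; simpa using h))).1
  have hDsum : ∑ i, (prob M ρ i * Real.log (prob M ρ i / (((M i).trace).re / d))
      - (prob M ρ i - ((M i).trace).re / d))
      = ∑ i, prob M ρ i * Real.log (prob M ρ i / (((M i).trace).re / d)) := by
    rw [Finset.sum_sub_distrib, Finset.sum_sub_distrib, hsum_p, ← Finset.sum_div, hsum_V]
    rw [div_self (ne_of_gt hdR), sub_self, sub_zero]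
  have hiff1 : Sobs M ρ = Real.log d
      ↔ ∀ i, prob M ρ i = ((M i).trace).re / d := by
    rw [hrw, sub_eq_self, ← hDsum]
    rw [Finset.sum_eq_zero_iff_of_nonneg hterm_nn]
    constructor
    · intro h i
      exact (gibbs_term (hp i).1 (div_nonneg (hV i).1 hdR.le)
        (fun hz => hq0 i (by field_simp at hz; simpa using hz))).2.mp (h i (Finset.mem_univ i))
    · intro h i _
      exact (gibbs_term (hp i).1 (div_nonneg (hV i).1 hdR.le)
        (fun hz => hq0 i (by field_simp at hz; simpa using hz))).2.mpr (h i)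
  rw [hiff1]
  -- trace identity
  have htr : ∀ i, ((ρ - ((d : ℂ))⁻¹ • (1 : Matrix (Fin d) (Fin d) ℂ)) * M i).trace
      = ((prob M ρ i : ℝ) : ℂ) - ((((M i).trace).re / d : ℝ) : ℂ) := by
    intro i
    rw [Matrix.sub_mul, Matrix.trace_sub, Matrix.smul_mul, Matrix.one_mul, Matrix.trace_smul,
      Matrix.trace_mul_comm, (hp i).2]
    have := (hV i).2.1
    conv_lhs => rw [this]
    rw [smul_eq_mul]
    push_cast
    ring
  constructor
  · intro h i
    rw [htr i, h i]
    ring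
  · intro h i
    have := h i
    rw [htr i, sub_eq_zero] at this
    exact_mod_cast this
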